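/- Lemma 2, case p = 1: Let f ∈ L¹_A(ℝ₊) on the Jacobi hypergroup. Then there exists a positive constant c such that for every δ > 0, ess sup_{x>0} ( min{1, (δx)²} |𝓕(f)(x)| ) ≤ c ω_{A,1}(f)(δ). -/

import Mathlib

open MeasureTheory Set Filter

/-- The `L^p` norm on `(0,∞)` with respect to the weighted measure `w(x) dx`. -/
noncomputable def wLpNorm (w : ℝ → ℝ) (p : ℝ) (f : ℝ → ℂ) : ℝ :=
  (∫ x in Set.Ioi (0 : ℝ), ‖f x‖ ^ p * w x) ^ (1 / p)

/-- Membership in `L^p((0,∞), w(x) dx)`. -/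
def MemW (w : ℝ → ℝ) (p : ℝ) (f : ℝ → ℂ) : Prop :=
  AEMeasurable f (volume.restrict (Set.Ioi (0 : ℝ))) ∧
    IntegrableOn (fun x => ‖f x‖ ^ p * w x) (Set.Ioi (0 : ℝ))

/-- The Jacobi hypergroup setting: the Chébli–Trimèche hypergroup `(ℝ₊, ∗(A))` with
`A(x) = 2^(2ρ) (sinh x)^(2α+1) (cosh x)^(2β+1)`, `α ≥ β ≥ -1/2`, `α ≠ -1/2`,
`ρ = α + β + 1`.  Its characters are the Jacobi functions `φ_λ`, satisfying
`|1 - φ_λ(t)| ≥ c₀ min{1, (λt)²}`.  The density `cden = |c(λ)|⁻²` is even, continuous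
and comparable to `|λ|^(2α+1)` for `|λ| > k` and to `|λ|²` for `|λ| ≤ k`.  The
generalized Fourier transform `FT` is given on `L¹_A` by
`𝓕(f)(λ) = ∫₀^∞ f(x) φ_λ(x) A(x) dx`; it satisfies `‖𝓕 f‖_∞ ≤ ‖f‖_{A,1}`, the
Hausdorff–Young inequality, the Hardy–Littlewood inequality of Lemma 1 and the
translation identity `𝓕(τ_δ f)(λ) = φ_λ(δ) 𝓕(f)(λ)`, where the generalized
translations `τ_δ` are `L^p_A`-contractions. -/
structure JacobiHypergroup where
  α : ℝ
  β : ℝ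
  ρ : ℝ
  hβα : β ≤ α
  hβ : -(1/2) ≤ β
  hα : α ≠ -(1/2)
  hρ : ρ = α + β + 1
  /-- the weight function `A` of the Jacobi hypergroup -/
  A : ℝ → ℝ
  hA : ∀ x : ℝ, 0 ≤ x →
    A x = (2 : ℝ) ^ (2 * ρ) * Real.sinh x ^ (2 * α + 1) * Real.cosh x ^ (2 * β + 1)
  /-- the Jacobi functions `φ_λ`, the characters of the hypergroup -/
  φ : ℝ → ℝ → ℂ
  c₀ : ℝ
  hc₀ : 0 < c₀
  hφ_lower : ∀ lam t : ℝ, 0 < t →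
    c₀ * min 1 ((lam * t) ^ 2) ≤ ‖1 - φ lam t‖
  /-- the density `|c(λ)|⁻²` of the Plancherel measure -/
  cden : ℝ → ℝ
  hcden_cont : Continuous cden
  hcden_even : ∀ x : ℝ, cden (-x) = cden x
  k : ℝ
  k₁ : ℝ
  k₂ : ℝ
  hk : 0 < k
  hk₁ : 0 < k₁
  hk₂ : 0 < k₂
  hcden_hi : ∀ x : ℝ, k < |x| →
    k₁ * |x| ^ (2 * α + 1) ≤ cden x ∧ cden x ≤ k₂ * |x| ^ (2 * α + 1)
  hcden_lo : ∀ x : ℝ, |x| ≤ k →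
    k₁ * |x| ^ (2 : ℝ) ≤ cden x ∧ cden x ≤ k₂ * |x| ^ (2 : ℝ)
  /-- the generalized Fourier transform -/
  FT : (ℝ → ℂ) → ℝ → ℂ
  hFT_def : ∀ f : ℝ → ℂ, MemW A 1 f → ∀ lam : ℝ,
    FT f lam = ∫ x in Set.Ioi (0 : ℝ), f x * φ lam x * (A x : ℂ)
  hFT_meas : ∀ f : ℝ → ℂ, Measurable (FT f)
  hFT_sub : ∀ f g : ℝ → ℂ, ∀ lam : ℝ,
    FT (fun y => f y - g y) lam = FT f lam - FT g lam
  /-- `‖𝓕 f‖_∞ ≤ ‖f‖_{A,1}` -/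
  hFT_sup : ∀ f : ℝ → ℂ, MemW A 1 f → ∀ lam : ℝ,
    ‖FT f lam‖ ≤ wLpNorm A 1 f
  /-- the Hausdorff–Young inequality `‖𝓕 f‖_{c,p'} ≤ C ‖f‖_{A,p}` -/
  hHY : ∀ p p' : ℝ, 1 < p → p ≤ 2 → 1 / p + 1 / p' = 1 →
    ∃ C > (0 : ℝ), ∀ f : ℝ → ℂ, MemW A p f →
      (∫⁻ lam in Set.Ioi (0 : ℝ),
          ENNReal.ofReal (‖FT f lam‖ ^ p' * cden lam)) ^ (1 / p')
        ≤ ENNReal.ofReal (C * wLpNorm A p f)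
  /-- the Hardy–Littlewood inequality of Lemma 1 (with the piecewise weight
  `g(t) = t³` for `t ≤ k`, `g(t) = t^(2(α+1))` for `t > k`) -/
  hHL : ∀ p : ℝ, 1 < p → p ≤ 2 →
    ∃ C > (0 : ℝ), ∀ f : ℝ → ℂ, MemW A p f →
      ∫⁻ x in Set.Ioi (0 : ℝ),
          ENNReal.ofReal ((if x ≤ k then x ^ (3 : ℝ) else x ^ (2 * (α + 1))) ^ (p - 2) *
            ‖FT f x‖ ^ p * cden x)
        ≤ ENNReal.ofReal (C * wLpNorm A p f ^ p)
  /-- the generalized translation operators -/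
  τ : ℝ → (ℝ → ℂ) → ℝ → ℂ
  hτ_contract : ∀ p : ℝ, 1 ≤ p → ∀ (δ : ℝ) (f : ℝ → ℂ), MemW A p f →
    MemW A p (τ δ f) ∧ wLpNorm A p (τ δ f) ≤ wLpNorm A p f
  hτ_diff : ∀ p : ℝ, 1 ≤ p → ∀ (δ : ℝ) (f : ℝ → ℂ), MemW A p f →
    MemW A p (fun y => τ δ f y - f y)
  /-- the translation identity `𝓕(τ_δ f)(λ) = φ_λ(δ) 𝓕(f)(λ)` -/
  hτ_FT : ∀ p : ℝ, 1 ≤ p → p ≤ 2 → ∀ (δ : ℝ) (f : ℝ → ℂ), MemW A p f →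
    ∀ᵐ lam ∂(volume.restrict (Set.Ioi (0 : ℝ))),
      FT (τ δ f) lam = φ lam δ * FT f lam

/-- The modulus of continuity of first order, `ω_{A,p}(f)(δ) = ‖τ_δ f - f‖_{A,p}`. -/
noncomputable def JacobiHypergroup.omega (S : JacobiHypergroup) (p : ℝ)
    (f : ℝ → ℂ) (δ : ℝ) : ℝ :=
  wLpNorm S.A p (fun y => S.τ δ f y - f y)

/-- **Lemma 2, case p = 1**: for `f ∈ L¹_A(ℝ₊)` on the Jacobi hypergroup, there
exists `c > 0` such that for every `δ > 0`,
`ess sup_{x>0} ( min{1,(δx)²} |𝓕(f)(x)| ) ≤ c ω_{A,1}(f)(δ)`. -/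
theorem lemma2_p_eq_one (S : JacobiHypergroup) (f : ℝ → ℂ) (hf : MemW S.A 1 f) :
    ∃ c > (0 : ℝ), ∀ δ > (0 : ℝ),
      essSup (fun x : ℝ => ENNReal.ofReal (min 1 ((δ * x) ^ 2) * ‖S.FT f x‖))
          (volume.restrict (Set.Ioi (0 : ℝ)))
        ≤ ENNReal.ofReal (c * S.omega 1 f δ) := by
  refine ⟨1 / S.c₀, by have := S.hc₀; positivity, fun δ hδ => ?_⟩
  have hdiff := S.hτ_diff 1 le_rfl δ f hf
  have hae := S.hτ_FT 1 le_rfl one_le_two δ f hf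
  refine essSup_le_of_ae_le _ ?_
  filter_upwards [hae] with x hx
  refine ENNReal.ofReal_le_ofReal ?_
  have h1 : S.c₀ * min 1 ((x * δ) ^ 2) ≤ ‖1 - S.φ x δ‖ := S.hφ_lower x δ hδ
  have h2 : ‖S.FT (fun y => S.τ δ f y - f y) x‖ ≤ S.omega 1 f δ :=
    S.hFT_sup _ hdiff x
  have h3 : (1 - S.φ x δ) * S.FT f x = -(S.FT (fun y => S.τ δ f y - f y) x) := by
    rw [S.hFT_sub (S.τ δ f) f x, hx]; ring
  have h4 : ‖1 - S.φ x δ‖ * ‖S.FT f x‖ ≤ S.omega 1 f δ := by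
    rw [← norm_mul, h3, norm_neg]; exact h2
  have h5 : S.c₀ * (min 1 ((x * δ) ^ 2) * ‖S.FT f x‖) ≤ S.omega 1 f δ := by
    calc S.c₀ * (min 1 ((x * δ) ^ 2) * ‖S.FT f x‖)
        = (S.c₀ * min 1 ((x * δ) ^ 2)) * ‖S.FT f x‖ := by ring
      _ ≤ ‖1 - S.φ x δ‖ * ‖S.FT f x‖ :=
          mul_le_mul_of_nonneg_right h1 (norm_nonneg _)
      _ ≤ S.omega 1 f δ := h4
  have hc := S.hc₀
  rw [mul_comm δ x]
  rw [div_mul_eq_mul_div, le_div_iff₀ hc]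
  linarith [h5]
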